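/- Let Γ ≤ Aff(ℝⁿ) be an n-dimensional crystallographic group with holonomy group F, and let φ be an automorphism of Γ. Then there exists (d,D) ∈ Aff(ℝⁿ) such that φ(γ) = (d,D) γ (d,D)⁻¹ for all γ ∈ Γ; moreover D lies in GLₙ(ℤ) and D F D⁻¹ = F, i.e. D belongs to the normaliser of F in GLₙ(ℤ). -/

import Mathlib

open Matrix

noncomputable section

@[ext]
structure Aff (n : ℕ) where
  tr : Fin n → ℝ
  lin : GL (Fin n) ℝ

namespace Aff

variable {n : ℕ}

instance : Mul (Aff n) :=
  ⟨fun a b => ⟨a.tr + (a.lin : Matrix (Fin n) (Fin n) ℝ) *ᵥ b.tr, a.lin * b.lin⟩⟩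

instance : One (Aff n) := ⟨⟨0, 1⟩⟩

instance : Inv (Aff n) :=
  ⟨fun a => ⟨((a.lin⁻¹ : GL (Fin n) ℝ) : Matrix (Fin n) (Fin n) ℝ) *ᵥ (-a.tr), a.lin⁻¹⟩⟩

theorem mul_def (a b : Aff n) :
    a * b = ⟨a.tr + (a.lin : Matrix (Fin n) (Fin n) ℝ) *ᵥ b.tr, a.lin * b.lin⟩ := rfl

theorem one_def : (1 : Aff n) = ⟨0, 1⟩ := rfl

theorem inv_def (a : Aff n) :
    a⁻¹ = ⟨((a.lin⁻¹ : GL (Fin n) ℝ) : Matrix (Fin n) (Fin n) ℝ) *ᵥ (-a.tr), a.lin⁻¹⟩ := rfl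

instance : Group (Aff n) where
  mul_assoc a b c := by
    ext i
    · simp [mul_def, Matrix.mulVec_add, Matrix.mulVec_mulVec, add_assoc, Units.val_mul]
    · simp [mul_def, mul_assoc]
  one_mul a := by
    ext i
    · simp [mul_def, one_def]
    · simp [mul_def, one_def]
  mul_one a := by
    ext i
    · simp [mul_def, one_def]
    · simp [mul_def, one_def]
  inv_mul_cancel a := by
    ext i
    · simp [mul_def, inv_def, one_def, Matrix.mulVec_neg]
    · simp [mul_def, inv_def, one_def]

end Aff

/-- The translation subgroup of `Γ` is exactly `ℤⁿ × {Iₙ}`. -/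
def HasIntTranslations {n : ℕ} (Γ : Subgroup (Aff n)) : Prop :=
  ∀ v : Fin n → ℝ, (Aff.mk v 1 ∈ Γ ↔ ∃ z : Fin n → ℤ, v = fun i => (z i : ℝ))

/-- The holonomy group of `Γ`, as the set of linear parts of elements of `Γ`. -/
def holonomy {n : ℕ} (Γ : Subgroup (Aff n)) : Set (GL (Fin n) ℝ) :=
  {D : GL (Fin n) ℝ | ∃ a : Fin n → ℝ, Aff.mk a D ∈ Γ}

/-- `D ∈ GLₙ(ℤ)`: both `D` and `D⁻¹` have integer entries. -/
def IsIntegralGL {n : ℕ} (D : GL (Fin n) ℝ) : Prop :=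
  (∀ i j, ∃ z : ℤ, (D : Matrix (Fin n) (Fin n) ℝ) i j = (z : ℝ)) ∧
  (∀ i j, ∃ z : ℤ, ((D⁻¹ : GL (Fin n) ℝ) : Matrix (Fin n) (Fin n) ℝ) i j = (z : ℝ))

/-- `Γ ≤ Aff(ℝⁿ)` is an `n`-dimensional crystallographic group. -/
def IsCrystallographic {n : ℕ} (Γ : Subgroup (Aff n)) : Prop :=
  HasIntTranslations Γ ∧ (holonomy Γ).Finite ∧ ∀ D ∈ holonomy Γ, IsIntegralGL D

/-- Conjugation by `g` maps `Γ` bijectively onto itself, i.e. `ξ_g` is an automorphism of `Γ`. -/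
def XiIsAut {n : ℕ} (g : Aff n) (Γ : Subgroup (Aff n)) : Prop :=
  ∀ γ : Aff n, γ ∈ Γ ↔ g * γ * g⁻¹ ∈ Γ

def twistedConj {G : Type*} [Group G] (φ : G →* G) (g g' : G) : Prop :=
  ∃ h : G, g = h * g' * (φ h)⁻¹

noncomputable def reidemeisterNumber {G : Type*} [Group G] (φ : G →* G) : ℕ∞ :=
  ENat.card (Quot (twistedConj φ))

noncomputable def reidemeisterSpectrum (G : Type*) [Group G] : Set ℕ∞ :=
  {r : ℕ∞ | ∃ φ : G ≃* G, reidemeisterNumber (φ : G →* G) = r}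

/-- The automorphism `ξ_{(d,D)}` of `Γ`, given by conjugation by `g = (d,D)`. -/
def xi {n : ℕ} (g : Aff n) (Γ : Subgroup (Aff n)) (h : XiIsAut g Γ) : Γ →* Γ where
  toFun x := ⟨g * (x : Aff n) * g⁻¹, (h x).mp x.2⟩
  map_one' := by
    apply Subtype.ext
    show g * ((1 : Γ) : Aff n) * g⁻¹ = ((1 : Γ) : Aff n)
    simp
  map_mul' x y := by
    apply Subtype.ext
    show g * ((x * y : Γ) : Aff n) * g⁻¹ =
      (g * (x : Aff n) * g⁻¹) * (g * (y : Aff n) * g⁻¹)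
    simp only [Subgroup.coe_mul]
    group

/-- `|x|_∞` for an integer `x`. -/
def intAbsInfty (x : ℤ) : ℕ∞ := if x = 0 then ⊤ else (x.natAbs : ℕ∞)

/-- `O(B,b)`: the number of solutions over `ℤ/2ℤ` of `B̄ x = b̄`. -/
noncomputable def Ocount {n : ℕ} (B : Matrix (Fin n) (Fin n) ℤ) (b : Fin n → ℤ) : ℕ :=
  Nat.card {x : Fin n → ZMod 2 // (B.map (Int.cast : ℤ → ZMod 2)) *ᵥ x = fun i => ((b i : ZMod 2))}


namespace Bieb
open Aff Matrix
variable {n : ℕ}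

@[simp] lemma aff_mul_tr (a b : Aff n) :
    (a * b).tr = a.tr + (a.lin : Matrix (Fin n) (Fin n) ℝ) *ᵥ b.tr := rfl
@[simp] lemma aff_mul_lin (a b : Aff n) : (a * b).lin = a.lin * b.lin := rfl
@[simp] lemma aff_one_tr : (1 : Aff n).tr = 0 := rfl
@[simp] lemma aff_one_lin : (1 : Aff n).lin = 1 := rfl
@[simp] lemma aff_inv_tr (a : Aff n) :
    (a⁻¹).tr = ((a.lin⁻¹ : GL (Fin n) ℝ) : Matrix (Fin n) (Fin n) ℝ) *ᵥ (-a.tr) := rfl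
@[simp] lemma aff_inv_lin (a : Aff n) : (a⁻¹).lin = a.lin⁻¹ := rfl

@[simp] lemma val_mul_val_inv (A : GL (Fin n) ℝ) :
    (A : Matrix (Fin n) (Fin n) ℝ) * ((A⁻¹ : GL (Fin n) ℝ) : Matrix (Fin n) (Fin n) ℝ) = 1 := by
  rw [← Units.val_mul, mul_inv_cancel, Units.val_one]
@[simp] lemma val_inv_mul_val (A : GL (Fin n) ℝ) :
    ((A⁻¹ : GL (Fin n) ℝ) : Matrix (Fin n) (Fin n) ℝ) * (A : Matrix (Fin n) (Fin n) ℝ) = 1 := by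
  rw [← Units.val_mul, inv_mul_cancel, Units.val_one]

@[simp] lemma val_mul_minv (A : GL (Fin n) ℝ) :
    (A : Matrix (Fin n) (Fin n) ℝ) * (A : Matrix (Fin n) (Fin n) ℝ)⁻¹ = 1 :=
  Matrix.mul_nonsing_inv _ ((Matrix.isUnit_iff_isUnit_det _).mp A.isUnit)
@[simp] lemma minv_mul_val (A : GL (Fin n) ℝ) :
    (A : Matrix (Fin n) (Fin n) ℝ)⁻¹ * (A : Matrix (Fin n) (Fin n) ℝ) = 1 :=
  Matrix.nonsing_inv_mul _ ((Matrix.isUnit_iff_isUnit_det _).mp A.isUnit)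

/-- integer vector cast -/
def cz (z : Fin n → ℤ) : Fin n → ℝ := fun i => (z i : ℝ)

lemma cz_inj : Function.Injective (cz (n := n)) := by
  intro a b h
  funext i
  have := congrFun h i
  simpa [cz] using this

@[simp] lemma cz_add (z w : Fin n → ℤ) : cz (z + w) = cz z + cz w := by
  funext i; simp [cz]

/-- translation element -/
def t (z : Fin n → ℤ) : Aff n := ⟨cz z, 1⟩

lemma t_mul (z w : Fin n → ℤ) : t z * t w = t (z + w) := by
  ext i <;> simp [t]

lemma conj_t (γ : Aff n) (z : Fin n → ℤ) :
    γ * t z * γ⁻¹ = ⟨(γ.lin : Matrix (Fin n) (Fin n) ℝ) *ᵥ cz z, 1⟩ := by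
  ext i
  · simp [t, Matrix.mulVec_add, Matrix.mulVec_mulVec, Matrix.mulVec_neg]
  · simp [t]

end Bieb
namespace Bieb
variable {n : ℕ}

lemma hol_one (Γ : Subgroup (Aff n)) : (1 : GL (Fin n) ℝ) ∈ holonomy Γ :=
  ⟨0, Γ.one_mem⟩

lemma lin_mem_holonomy {Γ : Subgroup (Aff n)} {γ : Aff n} (h : γ ∈ Γ) :
    γ.lin ∈ holonomy Γ := ⟨γ.tr, h⟩

lemma hol_mul {Γ : Subgroup (Aff n)} {A B : GL (Fin n) ℝ}
    (hA : A ∈ holonomy Γ) (hB : B ∈ holonomy Γ) : A * B ∈ holonomy Γ := by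
  obtain ⟨a, ha⟩ := hA
  obtain ⟨b, hb⟩ := hB
  exact ⟨(Aff.mk a A * Aff.mk b B).tr, by simpa [Aff.mul_def] using Γ.mul_mem ha hb⟩

lemma hol_fin_order {Γ : Subgroup (Aff n)} (hfin : (holonomy Γ).Finite)
    {B : GL (Fin n) ℝ} (hB : B ∈ holonomy Γ) : ∃ m : ℕ, 0 < m ∧ B ^ m = 1 := by
  have hpow : ∀ k : ℕ, B ^ k ∈ holonomy Γ := by
    intro k
    induction k with
    | zero => simpa using hol_one Γ
    | succ k ih => rw [pow_succ]; exact hol_mul ih hB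
  have : Finite (holonomy Γ) := hfin.to_subtype
  obtain ⟨i, j, hij, hfij⟩ :=
    Finite.exists_ne_map_eq_of_infinite (fun k : ℕ => (⟨B ^ k, hpow k⟩ : holonomy Γ))
  have hij' : B ^ i = B ^ j := congrArg Subtype.val hfij
  rcases lt_or_gt_of_ne hij with h | h
  · refine ⟨j - i, by omega, ?_⟩
    have : B ^ i * B ^ (j - i) = B ^ i * 1 := by
      rw [mul_one, ← pow_add]; rw [hij']; congr 1; omega
    exact mul_left_cancel this
  · refine ⟨i - j, by omega, ?_⟩
    have : B ^ j * B ^ (i - j) = B ^ j * 1 := by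
      rw [mul_one, ← pow_add]; rw [← hij']; congr 1; omega
    exact mul_left_cancel this

lemma unip {B : GL (Fin n) ℝ}
    (h2 : ((B : Matrix (Fin n) (Fin n) ℝ) - 1) * ((B : Matrix (Fin n) (Fin n) ℝ) - 1) = 0)
    {m : ℕ} (hm : 0 < m) (hBm : B ^ m = 1) : B = 1 := by
  set N : Matrix (Fin n) (Fin n) ℝ := (B : Matrix (Fin n) (Fin n) ℝ) - 1 with hN
  have key : ∀ k : ℕ, (B : Matrix (Fin n) (Fin n) ℝ) ^ k = 1 + (k : ℝ) • N := by
    intro k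
    induction k with
    | zero => simp
    | succ k ih =>
      rw [pow_succ, ih]
      have hB : (B : Matrix (Fin n) (Fin n) ℝ) = 1 + N := by rw [hN]; abel
      rw [hB, add_mul, one_mul, mul_add, mul_one, smul_mul_assoc, h2, smul_zero]
      push_cast
      rw [add_smul, one_smul]
      abel
  have h1 : ((B ^ m : GL (Fin n) ℝ) : Matrix (Fin n) (Fin n) ℝ) = 1 := by
    rw [hBm]; rfl
  rw [Units.val_pow_eq_pow_val, key m] at h1
  have hmN : (m : ℝ) • N = 0 := by
    have := h1
    rwa [add_eq_left] at this
  have hN0 : N = 0 := by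
    rcases smul_eq_zero.mp hmN with h | h
    · exact absurd h (by positivity)
    · exact h
  have : (B : Matrix (Fin n) (Fin n) ℝ) = 1 := by
    have h := hN0
    rw [hN, sub_eq_zero] at h
    exact h
  exact Units.ext this

end Bieb
namespace Bieb
variable {n : ℕ}

lemma int_mulVec {Γ : Subgroup (Aff n)} (hΓ : IsCrystallographic Γ)
    {A : GL (Fin n) ℝ} (hA : A ∈ holonomy Γ) (z : Fin n → ℤ) :
    ∃ w : Fin n → ℤ, (A : Matrix (Fin n) (Fin n) ℝ) *ᵥ cz z = cz w := by
  choose M hM using (hΓ.2.2 A hA).1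
  refine ⟨fun i => ∑ j, M i j * z j, ?_⟩
  funext i
  simp only [Matrix.mulVec, dotProduct, cz, hM]
  push_cast
  rfl

lemma cz_single (j : Fin n) : cz (Pi.single j 1) = Pi.single j (1 : ℝ) := by
  funext i
  simp [cz, Pi.single_apply]

lemma eq_zero_of_mulVec_int {M : Matrix (Fin n) (Fin n) ℝ}
    (h : ∀ z : Fin n → ℤ, M *ᵥ cz z = 0) : M = 0 := by
  ext i j
  have := congrFun (h (Pi.single j 1)) i
  rw [cz_single] at this
  simpa [Matrix.mulVec_single] using this

/-- conjugation of a translation by an element of `Γ` is a translation in `Γ`. -/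
lemma conj_t_mem {Γ : Subgroup (Aff n)} (hΓ : IsCrystallographic Γ)
    {γ : Aff n} (hγ : γ ∈ Γ) (z : Fin n → ℤ) :
    ∃ w : Fin n → ℤ, γ * t z * γ⁻¹ = t w := by
  obtain ⟨w, hw⟩ := int_mulVec hΓ (lin_mem_holonomy hγ) z
  exact ⟨w, by rw [conj_t, hw]; rfl⟩

/-- the key step: `φ` maps translations to translations. -/
lemma phi_t_lin {Γ : Subgroup (Aff n)} (hΓ : IsCrystallographic Γ) (φ : Γ ≃* Γ)
    (z : Fin n → ℤ) :
    ((φ ⟨t z, (hΓ.1 (cz z)).mpr ⟨z, rfl⟩⟩ : Γ) : Aff n).lin = 1 := by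
  set tz : Γ := ⟨t z, (hΓ.1 (cz z)).mpr ⟨z, rfl⟩⟩ with htz
  set β : Aff n := ((φ tz : Γ) : Aff n) with hβ
  set Bv : Matrix (Fin n) (Fin n) ℝ := (β.lin : Matrix (Fin n) (Fin n) ℝ) with hBv
  -- commutation with conjugates by translations
  have comm : ∀ w : Fin n → ℤ, (t w * β * (t w)⁻¹) * β = β * (t w * β * (t w)⁻¹) := by
    intro w
    have htwm : t w ∈ Γ := (hΓ.1 (cz w)).mpr ⟨w, rfl⟩
    set tw : Γ := ⟨t w, htwm⟩ with htw
    set u : Γ := φ.symm tw with hu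
    obtain ⟨w', hw'⟩ := conj_t_mem hΓ u.2 z
    have hw'' : (u * tz * u⁻¹ : Γ) = ⟨t w', by rw [← hw']; exact Γ.mul_mem (Γ.mul_mem u.2 tz.2) (Γ.inv_mem u.2)⟩ := by
      apply Subtype.ext
      exact hw'
    have htw'm : t w' ∈ Γ := (⟨t w', by rw [← hw']; exact Γ.mul_mem (Γ.mul_mem u.2 tz.2) (Γ.inv_mem u.2)⟩ : Γ).2
    -- φ of the conjugate
    have key : (tw : Aff n) * β * ((tw : Aff n))⁻¹ = ((φ ⟨t w', htw'm⟩ : Γ) : Aff n) := by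
      have : φ (u * tz * u⁻¹) = tw * φ tz * tw⁻¹ := by
        rw [_root_.map_mul, _root_.map_mul, map_inv, hu, MulEquiv.apply_symm_apply]
      rw [hw''] at this
      have := congrArg (fun x : Γ => (x : Aff n)) this
      simpa using this.symm
    have tcomm : (φ ⟨t w', htw'm⟩ : Γ) * φ tz = φ tz * (φ ⟨t w', htw'm⟩ : Γ) := by
      rw [← _root_.map_mul, ← _root_.map_mul]
      congr 1
      apply Subtype.ext
      show t w' * t z = t z * t w'
      rw [t_mul, t_mul, add_comm]
    have := congrArg (fun x : Γ => (x : Aff n)) tcomm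
    simp only [Subgroup.coe_mul] at this
    rw [← key] at this
    show ((tw : Aff n) * β * ((tw : Aff n))⁻¹) * β = β * ((tw : Aff n) * β * ((tw : Aff n))⁻¹)
    exact this
  -- derive the matrix identity
  have sq : ((1 : Matrix (Fin n) (Fin n) ℝ) - Bv) * (1 - Bv) = 0 := by
    apply eq_zero_of_mulVec_int (M := ((1 : Matrix (Fin n) (Fin n) ℝ) - Bv) * (1 - Bv))
    intro w
    have E := congrArg Aff.tr (comm w)
    funext i
    have Ei := congrFun E i
    simp only [aff_mul_tr, aff_mul_lin, aff_inv_tr, aff_inv_lin, t, inv_one,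
      Units.val_one, Matrix.one_mulVec, Matrix.mulVec_add, Matrix.mulVec_neg,
      Matrix.mulVec_mulVec, Pi.add_apply, Pi.neg_apply, one_mul, mul_one, ← hBv] at Ei
    simp only [Matrix.sub_mulVec, Matrix.mulVec_mulVec, Matrix.one_mul,
      Matrix.mul_one, Matrix.one_mulVec, Pi.sub_apply, Pi.zero_apply,
      Matrix.mul_sub, Matrix.sub_mul]
    linarith
  -- finite order
  have hBhol : β.lin ∈ holonomy Γ := lin_mem_holonomy (φ tz).2
  obtain ⟨m, hm, hBm⟩ := hol_fin_order hΓ.2.1 hBhol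
  have sq' : ((β.lin : Matrix (Fin n) (Fin n) ℝ) - 1) * ((β.lin : Matrix (Fin n) (Fin n) ℝ) - 1) = 0 := by
    have : (Bv - 1) = -(1 - Bv) := by abel
    rw [← hBv] at *
    rw [show (Bv - 1) = -(1 - Bv) by abel, neg_mul_neg]
    exact sq
  exact unip sq' hm hBm

end Bieb
namespace Bieb
variable {n : ℕ}

lemma t_inj : Function.Injective (t (n := n)) := fun a b h =>
  cz_inj (congrArg Aff.tr h)

section D
variable {Γ : Subgroup (Aff n)} (hΓ : IsCrystallographic Γ) (φ : Γ ≃* Γ)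

/-- the translation `t z` as an element of `Γ`. -/
def tG (z : Fin n → ℤ) : Γ := ⟨t z, (hΓ.1 (cz z)).mpr ⟨z, rfl⟩⟩

lemma tG_mul (z w : Fin n → ℤ) : tG hΓ z * tG hΓ w = tG hΓ (z + w) :=
  Subtype.ext (t_mul z w)

lemma exists_psi (z : Fin n → ℤ) :
    ∃ w : Fin n → ℤ, ((φ (tG hΓ z) : Γ) : Aff n) = t w := by
  have hlin : ((φ (tG hΓ z) : Γ) : Aff n).lin = 1 := phi_t_lin hΓ φ z
  have hmem := (φ (tG hΓ z)).2
  set β := ((φ (tG hΓ z)) : Aff n) with hb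
  have hβ : β = Aff.mk β.tr 1 := by
    ext i
    · rfl
    · rw [hlin]
  obtain ⟨w, hw⟩ := (hΓ.1 β.tr).mp (hβ ▸ hmem)
  exact ⟨w, by rw [hβ, hw]; rfl⟩

/-- the action of `φ` on the translation lattice. -/
def psi (z : Fin n → ℤ) : Fin n → ℤ := (exists_psi hΓ φ z).choose

lemma psi_spec (z : Fin n → ℤ) :
    ((φ (tG hΓ z) : Γ) : Aff n) = t (psi hΓ φ z) := (exists_psi hΓ φ z).choose_spec

lemma phi_tG (z : Fin n → ℤ) : φ (tG hΓ z) = tG hΓ (psi hΓ φ z) :=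
  Subtype.ext (psi_spec hΓ φ z)

lemma psi_add (z w : Fin n → ℤ) :
    psi hΓ φ (z + w) = psi hΓ φ z + psi hΓ φ w := by
  apply t_inj
  rw [← t_mul, ← psi_spec, ← psi_spec, ← psi_spec, ← tG_mul, _root_.map_mul]
  rfl

lemma psi_zero : psi hΓ φ 0 = 0 := by
  have h := psi_add hΓ φ 0 0
  simpa using h.symm

/-- `psi` as an additive hom. -/
def psiHom : (Fin n → ℤ) →+ (Fin n → ℤ) where
  toFun := psi hΓ φ
  map_zero' := psi_zero hΓ φ
  map_add' := psi_add hΓ φ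

/-- the integer matrix of `psi`. -/
def Mpsi : Matrix (Fin n) (Fin n) ℤ :=
  Matrix.of fun i j => psi hΓ φ (Pi.single j 1) i

lemma psi_eq_mulVec (z : Fin n → ℤ) : psi hΓ φ z = Mpsi hΓ φ *ᵥ z := by
  have hz : z = ∑ j, z j • Pi.single j (1 : ℤ) := by
    funext i
    simp [Pi.single_apply, Finset.sum_ite_eq']
  have : psi hΓ φ z = psiHom hΓ φ z := rfl
  rw [this]
  conv_lhs => rw [hz]
  rw [map_sum]
  funext i
  rw [Finset.sum_apply]
  simp only [map_zsmul, Pi.smul_apply, smul_eq_mul]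
  simp only [Matrix.mulVec, dotProduct, Mpsi, Matrix.of_apply]
  apply Finset.sum_congr rfl
  intro j _
  show z j * psiHom hΓ φ (Pi.single j 1) i = _
  rw [mul_comm]
  rfl

lemma psi_inv_psi (z : Fin n → ℤ) : psi hΓ φ.symm (psi hΓ φ z) = z := by
  apply t_inj
  have h1 : ((φ.symm (tG hΓ (psi hΓ φ z)) : Γ) : Aff n)
      = t (psi hΓ φ.symm (psi hΓ φ z)) := psi_spec hΓ φ.symm _
  rw [← phi_tG hΓ φ z, MulEquiv.symm_apply_apply] at h1
  rw [← h1]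
  rfl

lemma Mpsi_mul_symm : Mpsi hΓ φ.symm * Mpsi hΓ φ = 1 := by
  have h : ∀ z : Fin n → ℤ, (Mpsi hΓ φ.symm * Mpsi hΓ φ) *ᵥ z = z := by
    intro z
    rw [← Matrix.mulVec_mulVec, ← psi_eq_mulVec, ← psi_eq_mulVec, psi_inv_psi]
  ext i j
  have := congrFun (h (Pi.single j 1)) i
  simp only [Matrix.mulVec_single, mul_one, MulOpposite.op_one, one_smul, Matrix.col_apply] at this
  rw [this, Matrix.one_apply, Pi.single_apply]

end D
end Bieb
namespace Bieb
variable {n : ℕ}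

lemma map_mulVec_cz (M : Matrix (Fin n) (Fin n) ℤ) (z : Fin n → ℤ) :
    (M.map (Int.cast : ℤ → ℝ)) *ᵥ cz z = cz (M *ᵥ z) := by
  funext i
  simp only [Matrix.mulVec, dotProduct, cz, Matrix.map_apply]
  push_cast
  rfl

lemma map_int_mul (M N : Matrix (Fin n) (Fin n) ℤ) :
    (M * N).map (Int.cast : ℤ → ℝ) = M.map Int.cast * N.map Int.cast := by
  ext i j
  simp only [Matrix.map_apply, Matrix.mul_apply]
  push_cast
  rfl

lemma map_int_one : (1 : Matrix (Fin n) (Fin n) ℤ).map (Int.cast : ℤ → ℝ) = 1 := by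
  ext i j
  simp [Matrix.map_apply, Matrix.one_apply, apply_ite]

section D
variable {Γ : Subgroup (Aff n)} (hΓ : IsCrystallographic Γ) (φ : Γ ≃* Γ)

lemma Mpsi_mul_symm' : Mpsi hΓ φ * Mpsi hΓ φ.symm = 1 := by
  have := Mpsi_mul_symm hΓ φ.symm
  rwa [MulEquiv.symm_symm] at this

/-- the matrix `D ∈ GLₙ(ℤ) ⊆ GLₙ(ℝ)` induced by `φ` on the lattice. -/
def Dmat : GL (Fin n) ℝ where
  val := (Mpsi hΓ φ).map (Int.cast : ℤ → ℝ)
  inv := (Mpsi hΓ φ.symm).map (Int.cast : ℤ → ℝ)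
  val_inv := by
    rw [← map_int_mul, Mpsi_mul_symm' hΓ φ, map_int_one]
  inv_val := by
    rw [← map_int_mul, Mpsi_mul_symm hΓ φ, map_int_one]

lemma Dmat_val : ((Dmat hΓ φ : GL (Fin n) ℝ) : Matrix (Fin n) (Fin n) ℝ)
    = (Mpsi hΓ φ).map (Int.cast : ℤ → ℝ) := rfl

lemma Dmat_inv_val : (((Dmat hΓ φ)⁻¹ : GL (Fin n) ℝ) : Matrix (Fin n) (Fin n) ℝ)
    = (Mpsi hΓ φ.symm).map (Int.cast : ℤ → ℝ) := rfl

lemma Dmat_mulVec_cz (z : Fin n → ℤ) :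
    ((Dmat hΓ φ : GL (Fin n) ℝ) : Matrix (Fin n) (Fin n) ℝ) *ᵥ cz z = cz (psi hΓ φ z) := by
  rw [Dmat_val, map_mulVec_cz, ← psi_eq_mulVec]

lemma Dmat_integral : IsIntegralGL (Dmat hΓ φ) := by
  constructor
  · intro i j
    exact ⟨Mpsi hΓ φ i j, rfl⟩
  · intro i j
    exact ⟨Mpsi hΓ φ.symm i j, rfl⟩

/-- The matrix identity `B D = D A` where `B` is the linear part of `φ γ`. -/
lemma lin_phi_mat (γ : Γ) :
    (((φ γ : Γ) : Aff n).lin : Matrix (Fin n) (Fin n) ℝ) * (Dmat hΓ φ : Matrix (Fin n) (Fin n) ℝ)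
      = (Dmat hΓ φ : Matrix (Fin n) (Fin n) ℝ) * ((γ : Aff n).lin : Matrix (Fin n) (Fin n) ℝ) := by
  have key : ∀ z : Fin n → ℤ,
      ((((φ γ : Γ) : Aff n).lin : Matrix (Fin n) (Fin n) ℝ) * (Dmat hΓ φ : Matrix (Fin n) (Fin n) ℝ)) *ᵥ cz z
        = ((Dmat hΓ φ : Matrix (Fin n) (Fin n) ℝ) * ((γ : Aff n).lin : Matrix (Fin n) (Fin n) ℝ)) *ᵥ cz z := by
    intro z
    obtain ⟨w, hw⟩ := int_mulVec hΓ (lin_mem_holonomy γ.2) z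
    -- γ (t z) γ⁻¹ = t w  in Γ
    have hconj : γ * tG hΓ z * γ⁻¹ = tG hΓ w := by
      apply Subtype.ext
      show (γ : Aff n) * t z * (γ : Aff n)⁻¹ = t w
      rw [conj_t, hw]
      rfl
    have := congrArg φ hconj
    rw [_root_.map_mul, _root_.map_mul, map_inv, phi_tG hΓ φ z, phi_tG hΓ φ w] at this
    have hAff := congrArg (fun x : Γ => (x : Aff n)) this
    simp only [Subgroup.coe_mul, Subgroup.coe_inv] at hAff
    -- LHS : φγ * t (psi z) * (φγ)⁻¹
    rw [show ((tG hΓ (psi hΓ φ z) : Γ) : Aff n) = t (psi hΓ φ z) from rfl,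
        show ((tG hΓ (psi hΓ φ w) : Γ) : Aff n) = t (psi hΓ φ w) from rfl,
        conj_t] at hAff
    have htr := congrArg Aff.tr hAff
    simp only [t] at htr
    -- htr : B *ᵥ cz (psi z) = cz (psi w)
    rw [← Dmat_mulVec_cz hΓ φ, ← Dmat_mulVec_cz hΓ φ, ← hw] at htr
    rw [← Matrix.mulVec_mulVec, ← Matrix.mulVec_mulVec]
    exact htr
  have hz : ∀ z : Fin n → ℤ,
      (((((φ γ : Γ) : Aff n).lin : Matrix (Fin n) (Fin n) ℝ) * (Dmat hΓ φ : Matrix (Fin n) (Fin n) ℝ))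
        - ((Dmat hΓ φ : Matrix (Fin n) (Fin n) ℝ) * ((γ : Aff n).lin : Matrix (Fin n) (Fin n) ℝ))) *ᵥ cz z = 0 := by
    intro z
    rw [Matrix.sub_mulVec, key z, sub_self]
  have := eq_zero_of_mulVec_int hz
  rwa [sub_eq_zero] at this

lemma lin_phi (γ : Γ) :
    ((φ γ : Γ) : Aff n).lin = Dmat hΓ φ * (γ : Aff n).lin * (Dmat hΓ φ)⁻¹ := by
  apply Units.ext
  rw [Units.val_mul, Units.val_mul]
  have h := lin_phi_mat hΓ φ γ
  calc (((φ γ : Γ) : Aff n).lin : Matrix (Fin n) (Fin n) ℝ)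
      = (((φ γ : Γ) : Aff n).lin : Matrix (Fin n) (Fin n) ℝ)
        * ((Dmat hΓ φ : Matrix (Fin n) (Fin n) ℝ) * (((Dmat hΓ φ)⁻¹ : GL (Fin n) ℝ) : Matrix (Fin n) (Fin n) ℝ)) := by
        rw [val_mul_val_inv, mul_one]
    _ = _ := by rw [← mul_assoc, h, mul_assoc]

end D
end Bieb
namespace Bieb
variable {n : ℕ}

lemma hol_inv {Γ : Subgroup (Aff n)} {A : GL (Fin n) ℝ} (hA : A ∈ holonomy Γ) :
    A⁻¹ ∈ holonomy Γ := by
  obtain ⟨a, ha⟩ := hA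
  have := lin_mem_holonomy (Γ.inv_mem ha)
  simpa using this

lemma mulVec_sum' {ι : Type*} (M : Matrix (Fin n) (Fin n) ℝ) (s : Finset ι)
    (f : ι → Fin n → ℝ) : M *ᵥ (∑ x ∈ s, f x) = ∑ x ∈ s, M *ᵥ f x := by
  exact map_sum M.mulVecLin f s

section C
variable {Γ : Subgroup (Aff n)} (hΓ : IsCrystallographic Γ) (φ : Γ ≃* Γ)

/-- the cocycle `C γ = tr(φ γ) − D (tr γ)`. -/
def Cc (γ : Γ) : Fin n → ℝ :=
  ((φ γ : Γ) : Aff n).tr - ((Dmat hΓ φ : GL (Fin n) ℝ) : Matrix (Fin n) (Fin n) ℝ) *ᵥ (γ : Aff n).tr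

lemma Cc_cocycle (γ₁ γ₂ : Γ) :
    Cc hΓ φ (γ₁ * γ₂) = Cc hΓ φ γ₁
      + ((((φ γ₁ : Γ) : Aff n).lin : Matrix (Fin n) (Fin n) ℝ) *ᵥ Cc hΓ φ γ₂) := by
  unfold Cc
  rw [_root_.map_mul]
  simp only [Subgroup.coe_mul, aff_mul_tr, Matrix.mulVec_add, Matrix.mulVec_sub,
    Matrix.mulVec_mulVec]
  rw [← lin_phi_mat hΓ φ γ₁]
  abel

lemma Cc_tG (z : Fin n → ℤ) : Cc hΓ φ (tG hΓ z) = 0 := by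
  unfold Cc
  rw [phi_tG hΓ φ z]
  have h1 : ((tG hΓ (psi hΓ φ z) : Γ) : Aff n).tr = cz (psi hΓ φ z) := rfl
  have h2 : ((tG hΓ z : Γ) : Aff n).tr = cz z := rfl
  rw [h1, h2, Dmat_mulVec_cz, sub_self]

lemma Cc_lin_eq {γ γ' : Γ} (h : (γ : Aff n).lin = (γ' : Aff n).lin) :
    Cc hΓ φ γ = Cc hΓ φ γ' := by
  have hδlin : ((γ⁻¹ * γ' : Γ) : Aff n).lin = 1 := by
    simp only [Subgroup.coe_mul, Subgroup.coe_inv, aff_mul_lin, aff_inv_lin, ← h,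
      inv_mul_cancel]
  have hδmem := (γ⁻¹ * γ' : Γ).2
  have hδ : ((γ⁻¹ * γ' : Γ) : Aff n) = Aff.mk ((γ⁻¹ * γ' : Γ) : Aff n).tr 1 := by
    ext i
    · rfl
    · rw [hδlin]
  obtain ⟨z, hz⟩ := (hΓ.1 _).mp (hδ ▸ hδmem)
  have hδt : (γ⁻¹ * γ' : Γ) = tG hΓ z := by
    apply Subtype.ext
    rw [hδ, hz]
    rfl
  have hγ' : γ' = γ * tG hΓ z := by
    rw [← hδt, ← mul_assoc, mul_inv_cancel, one_mul]
  rw [hγ', Cc_cocycle, Cc_tG]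
  simp [Matrix.mulVec_zero]

open Classical in
/-- the cocycle as a function of the holonomy element alone. -/
def CF (A : GL (Fin n) ℝ) : Fin n → ℝ :=
  if h : A ∈ holonomy Γ then Cc hΓ φ ⟨⟨h.choose, A⟩, h.choose_spec⟩ else 0

lemma CF_eq {A : GL (Fin n) ℝ} (h : A ∈ holonomy Γ) (γ : Γ)
    (hγ : (γ : Aff n).lin = A) : CF hΓ φ A = Cc hΓ φ γ := by
  unfold CF
  rw [dif_pos h]

  exact Cc_lin_eq hΓ φ (by rw [hγ])

end C
end Bieb
namespace Bieb
variable {n : ℕ}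

section Avg
variable {Γ : Subgroup (Aff n)} (hΓ : IsCrystallographic Γ) (φ : Γ ≃* Γ)

lemma exists_d : ∃ d : Fin n → ℝ, ∀ γ : Γ,
    Cc hΓ φ γ = d - (((φ γ : Γ) : Aff n).lin : Matrix (Fin n) (Fin n) ℝ) *ᵥ d := by
  classical
  set Fs := hΓ.2.1.toFinset with hFs
  have hmem : ∀ A : GL (Fin n) ℝ, A ∈ Fs ↔ A ∈ holonomy Γ :=
    fun A => Set.Finite.mem_toFinset _
  set S := ∑ A ∈ Fs, CF hΓ φ A with hS
  set N := Fs.card with hNdef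
  have hN : 0 < N := Finset.card_pos.mpr ⟨1, (hmem 1).mpr (hol_one Γ)⟩
  refine ⟨(N : ℝ)⁻¹ • S, ?_⟩
  intro γ
  set A₁ := (γ : Aff n).lin with hA₁
  have hA₁h : A₁ ∈ holonomy Γ := lin_mem_holonomy γ.2
  set Bv := (((φ γ : Γ) : Aff n).lin : Matrix (Fin n) (Fin n) ℝ) with hBv
  have shift : ∑ A ∈ Fs, CF hΓ φ (A₁ * A) = S := by
    rw [hS]
    refine Finset.sum_equiv (Equiv.mulLeft A₁) ?_ ?_
    · intro A
      simp only [Equiv.coe_mulLeft, hmem]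
      constructor
      · exact fun h => hol_mul hA₁h h
      · intro h
        have := hol_mul (hol_inv hA₁h) h
        rwa [← mul_assoc, inv_mul_cancel, one_mul] at this
    · intro A _
      rfl
  have each : ∀ A ∈ Fs, CF hΓ φ (A₁ * A) = Cc hΓ φ γ + Bv *ᵥ CF hΓ φ A := by
    intro A hA
    have hAh : A ∈ holonomy Γ := (hmem A).mp hA
    set γA : Γ := ⟨⟨hAh.choose, A⟩, hAh.choose_spec⟩ with hγA
    have h1 : CF hΓ φ A = Cc hΓ φ γA := CF_eq hΓ φ hAh γA rfl
    have h2 : CF hΓ φ (A₁ * A) = Cc hΓ φ (γ * γA) :=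
      CF_eq hΓ φ (hol_mul hA₁h hAh) (γ * γA) rfl
    rw [h2, Cc_cocycle, h1]
  have main : S = N • Cc hΓ φ γ + Bv *ᵥ S := by
    calc S = ∑ A ∈ Fs, CF hΓ φ (A₁ * A) := shift.symm
    _ = ∑ A ∈ Fs, (Cc hΓ φ γ + Bv *ᵥ CF hΓ φ A) := Finset.sum_congr rfl each
    _ = N • Cc hΓ φ γ + Bv *ᵥ S := by
        rw [Finset.sum_add_distrib, Finset.sum_const, hS, mulVec_sum']
  have hNne : (N : ℝ) ≠ 0 := Nat.cast_ne_zero.mpr hN.ne'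
  have hkey : (N : ℝ) • Cc hΓ φ γ = S - Bv *ᵥ S := by
    rw [Nat.cast_smul_eq_nsmul]
    exact eq_sub_iff_add_eq.mpr main.symm
  calc Cc hΓ φ γ = (N : ℝ)⁻¹ • ((N : ℝ) • Cc hΓ φ γ) := by rw [inv_smul_smul₀ hNne]
  _ = (N : ℝ)⁻¹ • (S - Bv *ᵥ S) := by rw [hkey]
  _ = (N : ℝ)⁻¹ • S - Bv *ᵥ ((N : ℝ)⁻¹ • S) := by
      rw [smul_sub, Matrix.mulVec_smul]

end Avg
end Bieb
/-- Second Bieberbach theorem: every automorphism of a crystallographic group `Γ` is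
conjugation by some `(d,D) ∈ Aff(ℝⁿ)`, where moreover `D ∈ GLₙ(ℤ)` and `D` normalises
the holonomy group `F` of `Γ`. -/
theorem stmt5 {n : ℕ} (Γ : Subgroup (Aff n)) (hΓ : IsCrystallographic Γ)
    (φ : Γ ≃* Γ) :
    ∃ g : Aff n,
      (∀ γ : Γ, ((φ γ : Γ) : Aff n) = g * (γ : Aff n) * g⁻¹) ∧
      IsIntegralGL g.lin ∧
      (∀ A : GL (Fin n) ℝ, A ∈ holonomy Γ ↔ g.lin * A * g.lin⁻¹ ∈ holonomy Γ) := by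
  classical
  obtain ⟨d, hd⟩ := Bieb.exists_d hΓ φ
  refine ⟨⟨d, Bieb.Dmat hΓ φ⟩, ?_, Bieb.Dmat_integral hΓ φ, ?_⟩
  · intro γ
    have hlin := Bieb.lin_phi hΓ φ γ
    have htr := hd γ
    unfold Bieb.Cc at htr
    have h3 : ((φ γ : Γ) : Aff n).tr =
        (d - (((φ γ : Γ) : Aff n).lin : Matrix (Fin n) (Fin n) ℝ) *ᵥ d)
          + ((Bieb.Dmat hΓ φ : GL (Fin n) ℝ) : Matrix (Fin n) (Fin n) ℝ) *ᵥ (γ : Aff n).tr :=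
      sub_eq_iff_eq_add.mp htr
    refine Aff.ext ?_ ?_
    · show ((φ γ : Γ) : Aff n).tr = _
      simp only [Bieb.aff_mul_tr, Bieb.aff_mul_lin, Bieb.aff_inv_tr, Bieb.aff_inv_lin,
        Matrix.mulVec_neg, Matrix.mulVec_mulVec]
      rw [h3, ← Units.val_mul, ← hlin]
      abel
    · show ((φ γ : Γ) : Aff n).lin = _
      exact hlin
  · intro A
    constructor
    · rintro ⟨a, ha⟩
      have h1 := Bieb.lin_phi hΓ φ ⟨⟨a, A⟩, ha⟩
      have h2 := Bieb.lin_mem_holonomy (φ ⟨⟨a, A⟩, ha⟩).2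
      rw [h1] at h2
      exact h2
    · rintro ⟨b, hb⟩
      set δ := φ.symm ⟨⟨b, _⟩, hb⟩ with hδ
      have h1 := Bieb.lin_phi hΓ φ δ
      rw [hδ, MulEquiv.apply_symm_apply] at h1
      have h2 : (δ : Aff n).lin = A := by
        have h1' : Bieb.Dmat hΓ φ * A * (Bieb.Dmat hΓ φ)⁻¹
            = Bieb.Dmat hΓ φ * (δ : Aff n).lin * (Bieb.Dmat hΓ φ)⁻¹ := h1
        have := mul_right_cancel h1'
        exact (mul_left_cancel this).symm
      rw [← h2]
      exact Bieb.lin_mem_holonomy δ.2
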